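/- Let H be a real inner product space, g : H → H → ℝ a symmetric bilinear form, and π : H →ₗ H a self-adjoint linear map, i.e. ⟨π u, v⟩ = ⟨u, π v⟩ for all u, v ∈ H. Let C_ex > 0, k > 0, and define the energy E(u, φ) := (C_ex/2) * g u u − (1/2) * ⟨π u, u⟩ − ⟨φ, u⟩. Let m, m', f, f', Π, f½ ∈ H and a ∈ ℝ, and assume the discrete energy identity (C_ex/(2k)) * (g m' m' − g m m) + a = ⟨(m' − m)/k, Π + f½⟩. Then E(m', f') − E(m, f) + k * a + k * ⟨(f' − f)/k, (m + m')/2⟩ = k * ⟨(m' − m)/k, Π − π ((m + m')/2)⟩ + k * ⟨(m' − m)/k, f½ − (f + f')/2⟩. -/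

import Mathlib

open scoped InnerProductSpace

noncomputable section

/-- the per-time-step energy balance of the midpoint scheme
(from the proof of Theorem 3.1(c)). Here `E(u, φ) := (C_ex/2) g u u − ½⟨π u, u⟩ − ⟨φ, u⟩`
is written out explicitly, `Pih` plays the role of `Π`, and `fh` that of `f^{i+1/2}`. -/
theorem stmt9 {H : Type*} [NormedAddCommGroup H] [InnerProductSpace ℝ H]
    (g : H →ₗ[ℝ] H →ₗ[ℝ] ℝ) (hg : ∀ u v : H, g u v = g v u)
    (π : H →ₗ[ℝ] H) (hπ : ∀ u v : H, ⟪π u, v⟫_ℝ = ⟪u, π v⟫_ℝ)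
    (Cex k : ℝ) (hCex : 0 < Cex) (hk : 0 < k)
    (m m' f f' Pih fh : H) (a : ℝ)
    (hE : Cex / (2 * k) * (g m' m' - g m m) + a = ⟪k⁻¹ • (m' - m), Pih + fh⟫_ℝ) :
    (Cex / 2 * g m' m' - (1 / 2) * ⟪π m', m'⟫_ℝ - ⟪f', m'⟫_ℝ)
        - (Cex / 2 * g m m - (1 / 2) * ⟪π m, m⟫_ℝ - ⟪f, m⟫_ℝ)
        + k * a
        + k * ⟪k⁻¹ • (f' - f), (2:ℝ)⁻¹ • (m + m')⟫_ℝ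
      = k * ⟪k⁻¹ • (m' - m), Pih - π ((2:ℝ)⁻¹ • (m + m'))⟫_ℝ
        + k * ⟪k⁻¹ • (m' - m), fh - (2:ℝ)⁻¹ • (f + f')⟫_ℝ := by
  have hmm := hπ m m'
  have hE' := hE
  simp only [map_smul, map_add, inner_smul_left, inner_smul_right, inner_add_left,
    inner_add_right, inner_sub_left, inner_sub_right, RCLike.conj_to_real] at hE' hmm ⊢
  field_simp at hE' ⊢
  linear_combination hE' + real_inner_comm (π m') m' + real_inner_comm m (π m)
    + real_inner_comm (π m) m' + hmm + real_inner_comm f' m' + real_inner_comm m f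
    + real_inner_comm m f' + real_inner_comm f m'
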